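/- Suppose there exists h₀ in the interior of the cone K = {h ∈ ℝ^p : Σ_{j∈S^c}|h_j| < −sᵀh interpreted with strict inequality on the interior} with Xh₀ = 0 and h₀ ≠ 0, where b₀ has sign pattern s with support S. Then there exists t > 0 and b̃₀ = b₀ + t h₀ ≠ b₀ with Xb̃₀ = Xb₀ and ‖b̃₀‖₁ < ‖b₀‖₁. -/

import Mathlib

open Matrix BigOperators

noncomputable def vnorm1 {m : ℕ} (v : Fin m → ℝ) : ℝ := ∑ i, |v i|

/-- a nonzero kernel vector in the interior of the cone `K`
yields a feasible point of Basis Pursuit with strictly smaller L1 norm. -/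
theorem stmt_10 {n p : ℕ} (X : Matrix (Fin n) (Fin p) ℝ)
    (s : Fin p → ℝ) (hs : ∀ j, s j = -1 ∨ s j = 0 ∨ s j = 1)
    (S : Finset (Fin p)) (hS : S = Finset.univ.filter (fun j => s j ≠ 0))
    (b₀ : Fin p → ℝ)
    (hsign : ∀ j ∈ S, Real.sign (b₀ j) = s j ∧ b₀ j ≠ 0)
    (hzero : ∀ j, j ∉ S → b₀ j = 0)
    (h₀ : Fin p → ℝ) (hker : X.mulVec h₀ = 0) (hne : h₀ ≠ 0)
    (hint : ∑ j ∈ Sᶜ, |h₀ j| < -(s ⬝ᵥ h₀)) :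
    ∃ t : ℝ, 0 < t ∧
      X.mulVec (b₀ + t • h₀) = X.mulVec b₀ ∧
      b₀ + t • h₀ ≠ b₀ ∧
      vnorm1 (b₀ + t • h₀) < vnorm1 b₀ := by
  have hs0 : ∀ j, j ∉ S → s j = 0 := by
    intro j hj
    by_contra h
    exact hj (by rw [hS]; simp [h])
  have hSne : S.Nonempty := by
    by_contra hemp
    rw [Finset.not_nonempty_iff_eq_empty] at hemp
    have hsd : s ⬝ᵥ h₀ = 0 := by
      unfold dotProduct
      apply Finset.sum_eq_zero
      intro j _
      rw [hs0 j (by simp [hemp]), zero_mul]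
    rw [hsd, neg_zero, hemp, Finset.compl_empty] at hint
    have : (0:ℝ) ≤ ∑ j, |h₀ j| := Finset.sum_nonneg fun j _ => abs_nonneg _
    linarith
  set t : ℝ := S.inf' hSne (fun j => |b₀ j| / (|h₀ j| + 1)) with ht
  have htpos : 0 < t := by
    rw [ht, Finset.lt_inf'_iff]
    intro j hj
    exact div_pos (abs_pos.mpr (hsign j hj).2) (by positivity)
  have hsmall : ∀ j ∈ S, t * |h₀ j| < |b₀ j| := by
    intro j hj
    have h1 : t ≤ |b₀ j| / (|h₀ j| + 1) := Finset.inf'_le _ hj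
    have h2 : t * (|h₀ j| + 1) ≤ |b₀ j| := by
      rw [← le_div_iff₀ (by positivity)]; exact h1
    nlinarith [abs_nonneg (h₀ j)]
  have habs : ∀ j ∈ S, |b₀ j + t * h₀ j| = |b₀ j| + t * (s j * h₀ j) := by
    intro j hj
    obtain ⟨hsgn, hne0⟩ := hsign j hj
    have hth : |t * h₀ j| = t * |h₀ j| := by
      rw [abs_mul, abs_of_pos htpos]
    rcases (hs j) with h1 | h1 | h1
    · have hb : b₀ j < 0 := by
        rcases lt_trichotomy (b₀ j) 0 with h | h | h
        · exact h
        · exact absurd (h ▸ hsgn) (by simp [Real.sign_zero, h1])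
        · rw [Real.sign_of_pos h] at hsgn; rw [← hsgn] at h1; norm_num at h1
      have : b₀ j + t * h₀ j < 0 := by
        have := hsmall j hj
        have h3 : t * h₀ j ≤ t * |h₀ j| := by
          have := le_abs_self (h₀ j)
          nlinarith
        rw [abs_of_neg hb] at this
        linarith
      rw [abs_of_neg this, abs_of_neg hb, h1]; ring
    · exact absurd ((hS ▸ hj : j ∈ Finset.univ.filter _)) (by simp [h1])
    · have hb : 0 < b₀ j := by
        rcases lt_trichotomy (b₀ j) 0 with h | h | h
        · rw [Real.sign_of_neg h] at hsgn; rw [← hsgn] at h1; norm_num at h1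
        · exact absurd (h ▸ hsgn) (by simp [Real.sign_zero, h1])
        · exact h
      have : 0 < b₀ j + t * h₀ j := by
        have := hsmall j hj
        have h3 : -(t * |h₀ j|) ≤ t * h₀ j := by
          have := neg_abs_le (h₀ j)
          nlinarith
        rw [abs_of_pos hb] at this
        linarith
      rw [abs_of_pos this, abs_of_pos hb, h1]; ring
  refine ⟨t, htpos, ?_, ?_, ?_⟩
  · rw [Matrix.mulVec_add, Matrix.mulVec_smul, hker, smul_zero, add_zero]
  · intro h
    apply hne
    funext j
    have h2 := congrFun h j
    simp only [Pi.add_apply, Pi.smul_apply, smul_eq_mul] at h2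
    have h3 : t * h₀ j = 0 := by linarith
    rcases mul_eq_zero.mp h3 with h' | h'
    · exact absurd h' (ne_of_gt htpos)
    · exact h'
  · unfold vnorm1
    have hsplit : ∀ v : Fin p → ℝ, ∑ i, |v i| = ∑ i ∈ S, |v i| + ∑ i ∈ Sᶜ, |v i| := by
      intro v
      rw [← Finset.sum_add_sum_compl S]
    rw [hsplit, hsplit]
    have hSsum : ∑ i ∈ S, |(b₀ + t • h₀) i| = ∑ i ∈ S, |b₀ i| + t * ∑ i ∈ S, s i * h₀ i := by
      rw [Finset.mul_sum, ← Finset.sum_add_distrib]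
      apply Finset.sum_congr rfl
      intro j hj
      simp only [Pi.add_apply, Pi.smul_apply, smul_eq_mul]
      exact habs j hj
    have hCsum : ∑ i ∈ Sᶜ, |(b₀ + t • h₀) i| = t * ∑ i ∈ Sᶜ, |h₀ i| := by
      rw [Finset.mul_sum]
      apply Finset.sum_congr rfl
      intro j hj
      simp only [Pi.add_apply, Pi.smul_apply, smul_eq_mul]
      rw [hzero j (Finset.mem_compl.mp hj), zero_add, abs_mul, abs_of_pos htpos]
    have hdot : s ⬝ᵥ h₀ = ∑ i ∈ S, s i * h₀ i := by
      unfold dotProduct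
      rw [← Finset.sum_add_sum_compl S (fun i => s i * h₀ i)]
      have : ∑ i ∈ Sᶜ, s i * h₀ i = 0 := by
        apply Finset.sum_eq_zero
        intro j hj
        rw [hs0 j (Finset.mem_compl.mp hj), zero_mul]
      rw [this, add_zero]
    have hCb : ∑ i ∈ Sᶜ, |b₀ i| = 0 := by
      apply Finset.sum_eq_zero
      intro j hj
      rw [hzero j (Finset.mem_compl.mp hj), abs_zero]
    rw [hSsum, hCsum, hCb, add_zero]
    have hkey : t * (∑ i ∈ S, s i * h₀ i + ∑ i ∈ Sᶜ, |h₀ i|) < 0 := by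
      apply mul_neg_of_pos_of_neg htpos
      rw [hdot] at hint
      linarith
    nlinarith
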